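/- (Claim 2 in the proof of Theorem 1.) Suppose the probability measure π is invariant for the Markov operator P, that π(K) > 0, and that P satisfies the minorization condition P1_A(x) ≥ α ν(A) 1_K(x) for all A ∈ ℬ and x, with α > 0 and ν a probability measure. Then for every f ∈ L²(π), setting m = (1/π(K)) ∫_K f dπ, one has ∫_K (f − m)² dπ ≤ (2/α) · ⟨f, (I−P)f⟩_π. -/

import Mathlib

open MeasureTheory ProbabilityTheory
open scoped ENNReal

/-- Jensen: for a probability measure, `(∫ f)² ≤ ∫ f²`. -/
theorem sq_integral_le_integral_sq {X : Type*} [MeasurableSpace X]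
    {μ : Measure X} [IsProbabilityMeasure μ] {f : X → ℝ}
    (hf : Integrable f μ) (hf2 : Integrable (fun x => f x ^ 2) μ) :
    (∫ x, f x ∂μ) ^ 2 ≤ ∫ x, f x ^ 2 ∂μ := by
  set c := ∫ x, f x ∂μ with hc
  have h0 : 0 ≤ ∫ x, (f x - c) ^ 2 ∂μ := integral_nonneg fun x => sq_nonneg _
  have hexp : ∀ x, (f x - c) ^ 2 = f x ^ 2 - (2 * c) * f x + c ^ 2 := by intro x; ring
  rw [integral_congr_ae (Filter.Eventually.of_forall hexp)] at h0
  have i1 : Integrable (fun x => f x ^ 2 - 2 * c * f x) μ := hf2.sub (hf.const_mul (2 * c))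
  rw [integral_add i1 (integrable_const _),
    integral_sub hf2 (hf.const_mul (2 * c)), integral_const_mul, integral_const] at h0
  simp only [measure_univ, measureReal_def, ENNReal.toReal_one, smul_eq_mul, one_mul, ← hc] at h0
  nlinarith [h0]

theorem claim2_aux
    {X : Type*} [MeasurableSpace X]
    (κ : Kernel X X) [IsMarkovKernel κ]
    (π : Measure X) [IsProbabilityMeasure π]
    (hinv : ∀ f : X → ℝ, Measurable f → (∃ C : ℝ, ∀ x, |f x| ≤ C) →
      ∫ x, (∫ y, f y ∂(κ x)) ∂π = ∫ x, f x ∂π)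
    (K : Set X) (hK : MeasurableSet K) (hπK : 0 < π K)
    (α : ℝ) (hα : 0 < α) (ν : Measure X) [IsProbabilityMeasure ν]
    (hminor : ∀ A : Set X, MeasurableSet A → ∀ x ∈ K, ENNReal.ofReal α * ν A ≤ κ x A)
    (f : X → ℝ) (hfm : Measurable f) (hf : MemLp f 2 π) :
    (∫ x in K, (f x - (π K).toReal⁻¹ * ∫ y in K, f y ∂π) ^ 2 ∂π)
      ≤ (2 / α) * ∫ x, f x * (f x - ∫ y, f y ∂(κ x)) ∂π := by
  -- Step 0: π is invariant as a measure: π.bind κ = π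
  have hbind : π.bind (fun x => κ x) = π := by
    ext A hA
    rw [Measure.bind_apply hA (Kernel.measurable κ).aemeasurable]
    have h1 := hinv (A.indicator (1 : X → ℝ)) (measurable_one.indicator hA)
      ⟨1, fun x => by by_cases h : x ∈ A <;> simp [Set.indicator_apply, h]⟩
    simp_rw [integral_indicator_one hA, measureReal_def] at h1
    have hmeas : Measurable fun x => κ x A := Kernel.measurable_coe κ hA
    have hlt : ∀ᵐ x ∂π, κ x A < ∞ := Filter.Eventually.of_forall fun x => measure_lt_top _ _
    rw [integral_toReal hmeas.aemeasurable hlt] at h1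
    have hfin : ∫⁻ x, κ x A ∂π ≠ ∞ := by
      refine (lt_of_le_of_lt (lintegral_mono fun x => ?_) (by simp : (∫⁻ (_ : X), 1 ∂π) < ∞)).ne
      exact prob_le_one
    exact (ENNReal.toReal_eq_toReal_iff' hfin (measure_ne_top π A)).mp h1
  -- lintegral invariance
  have hinvL : ∀ g : X → ℝ≥0∞, Measurable g →
      ∫⁻ x, ∫⁻ y, g y ∂(κ x) ∂π = ∫⁻ y, g y ∂π := by
    intro g hg
    conv_rhs => rw [← hbind]
    exact (Measure.lintegral_bind (Kernel.measurable κ).aemeasurable hg.aemeasurable).symm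
  -- notation
  set m : ℝ := (π K).toReal⁻¹ * ∫ y in K, f y ∂π with hm
  -- G = |f|² in ℝ≥0∞, L x = ∫ G dκ x
  set G : X → ℝ≥0∞ := fun y => ENNReal.ofReal (f y ^ 2) with hG
  have hGm : Measurable G := (hfm.pow_const 2).ennreal_ofReal
  have hf2int : Integrable (fun x => f x ^ 2) π := hf.integrable_sq
  have hGfin : ∫⁻ y, G y ∂π < ∞ := by
    have := hf2int.hasFiniteIntegral
    rw [hasFiniteIntegral_iff_norm] at this
    refine lt_of_le_of_lt (lintegral_mono fun y => ?_) this
    exact ENNReal.ofReal_le_ofReal (le_abs_self _)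
  set L : X → ℝ≥0∞ := fun x => ∫⁻ y, G y ∂(κ x) with hL
  have hLm : Measurable L :=
    Measurable.lintegral_kernel_prod_right' (f := fun p : X × X => G p.2)
      (hGm.comp measurable_snd)
  have hLint : ∫⁻ x, L x ∂π = ∫⁻ y, G y ∂π := hinvL G hGm
  have hLfin : ∀ᵐ x ∂π, L x < ∞ := by
    refine ae_lt_top hLm ?_
    rw [hLint]; exact hGfin.ne
  -- integrability of f and f² wrt κ x whenever L x < ∞
  have hkey : ∀ μ : Measure X, IsProbabilityMeasure μ → (∫⁻ y, G y ∂μ) < ∞ →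
      Integrable f μ ∧ Integrable (fun y => f y ^ 2) μ ∧ MemLp f 2 μ := by
    intro μ hμ hfin
    have hsq : Integrable (fun y => f y ^ 2) μ := by
      refine ⟨(hfm.pow_const 2).aestronglyMeasurable, ?_⟩
      rw [hasFiniteIntegral_iff_norm]
      refine lt_of_le_of_lt (lintegral_mono fun y => ?_) hfin
      exact ENNReal.ofReal_le_ofReal (by rw [Real.norm_eq_abs, abs_of_nonneg (sq_nonneg _)])
    have h2 : MemLp f 2 μ :=
      (memLp_two_iff_integrable_sq hfm.aestronglyMeasurable).mpr hsq
    exact ⟨h2.integrable one_le_two, hsq, h2⟩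
  -- Pf and Pf2
  set Pf : X → ℝ := fun x => ∫ y, f y ∂(κ x) with hPf
  have hPfm : StronglyMeasurable Pf :=
    StronglyMeasurable.integral_kernel_prod_right' (κ := κ) (f := fun p : X × X => f p.2)
      (hfm.comp measurable_snd).stronglyMeasurable
  set Pf2 : X → ℝ := fun x => ∫ y, f y ^ 2 ∂(κ x) with hPf2
  have hPf2L : ∀ x, Pf2 x = (L x).toReal := fun x =>
    integral_eq_lintegral_of_nonneg_ae (Filter.Eventually.of_forall fun y => sq_nonneg _)
      (hfm.pow_const 2).aestronglyMeasurable
  have hPf2nn : ∀ x, 0 ≤ Pf2 x := fun x => (hPf2L x) ▸ ENNReal.toReal_nonneg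
  have hPf2int : Integrable Pf2 π := by
    rw [show Pf2 = fun x => (L x).toReal from funext hPf2L]
    exact integrable_toReal_of_lintegral_ne_top hLm.aemeasurable (hLint ▸ hGfin.ne)
  have hPf2eq : ∫ x, Pf2 x ∂π = ∫ x, f x ^ 2 ∂π := by
    rw [show Pf2 = fun x => (L x).toReal from funext hPf2L,
      integral_toReal hLm.aemeasurable hLfin, hLint,
      integral_eq_lintegral_of_nonneg_ae (Filter.Eventually.of_forall fun y => sq_nonneg _)
        (hfm.pow_const 2).aestronglyMeasurable]
  -- a.e. facts about κ x
  have hae : ∀ᵐ x ∂π, Integrable f (κ x) ∧ Integrable (fun y => f y ^ 2) (κ x) ∧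
      MemLp f 2 (κ x) := by
    filter_upwards [hLfin] with x hx
    exact hkey (κ x) inferInstance hx
  have haePfle : ∀ᵐ x ∂π, (Pf x) ^ 2 ≤ Pf2 x := by
    filter_upwards [hae] with x ⟨h1, h2, _⟩
    exact sq_integral_le_integral_sq h1 h2
  have haeexp : ∀ᵐ x ∂π,
      ∫ y, (f x - f y) ^ 2 ∂(κ x) = f x ^ 2 - 2 * f x * Pf x + Pf2 x := by
    filter_upwards [hae] with x ⟨h1, h2, _⟩
    have e : ∀ y, (f x - f y) ^ 2 = f x ^ 2 - (2 * f x) * f y + f y ^ 2 := fun y => by ring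
    rw [integral_congr_ae (Filter.Eventually.of_forall e)]
    have i1 : Integrable (fun y => f x ^ 2 - (2 * f x) * f y) (κ x) :=
      (integrable_const _).sub (h1.const_mul _)
    rw [integral_add i1 h2, integral_sub (integrable_const _) (h1.const_mul _),
      integral_const_mul, integral_const]
    simp only [measure_univ, measureReal_def, ENNReal.toReal_one, smul_eq_mul, one_mul]
    rfl
  -- integrability of f · Pf
  have hfPf_int : Integrable (fun x => f x * Pf x) π := by
    refine Integrable.mono ((hf2int.add hPf2int).div_const 2)
      (hfm.aestronglyMeasurable.mul hPfm.aestronglyMeasurable) ?_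
    filter_upwards [haePfle] with x hx
    rw [Real.norm_eq_abs, Real.norm_eq_abs, abs_mul]
    have h1 : |f x| * |Pf x| ≤ (f x ^ 2 + Pf x ^ 2) / 2 := by nlinarith [sq_nonneg (|f x| - |Pf x|), sq_abs (f x), sq_abs (Pf x)]
    have h2 : (f x ^ 2 + Pf x ^ 2) / 2 ≤ (f x ^ 2 + Pf2 x) / 2 := by linarith
    refine le_trans (le_trans h1 h2) (le_abs_self _)
  -- the Dirichlet form
  set D : ℝ := ∫ x, f x * (f x - Pf x) ∂π with hD
  have hDsplit : D = ∫ x, f x ^ 2 ∂π - ∫ x, f x * Pf x ∂π := by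
    rw [hD, ← integral_sub hf2int hfPf_int]
    exact integral_congr_ae (Filter.Eventually.of_forall fun x => by ring)
  -- g x = ∫ (f x - f y)² dκx a.e.
  set g : X → ℝ := fun x => f x ^ 2 - 2 * f x * Pf x + Pf2 x with hg
  have hgint : Integrable g π :=
    (hf2int.sub ((hfPf_int.const_mul 2).congr (Filter.Eventually.of_forall fun x => by ring))).add hPf2int
  have hgnn : 0 ≤ᵐ[π] g := by
    filter_upwards [haeexp] with x hx
    rw [hg]; dsimp only; rw [← hx]
    exact integral_nonneg fun y => sq_nonneg _
  have hgeq : ∫ x, g x ∂π = 2 * D := by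
    rw [hg, hDsplit]
    have i1 : Integrable (fun x => f x ^ 2 - 2 * f x * Pf x) π :=
      hf2int.sub ((hfPf_int.const_mul 2).congr (Filter.Eventually.of_forall fun x => by ring))
    rw [integral_add i1 hPf2int, integral_sub hf2int
      ((hfPf_int.const_mul 2).congr (Filter.Eventually.of_forall fun x => by ring)), hPf2eq]
    have : ∫ x, 2 * f x * Pf x ∂π = 2 * ∫ x, f x * Pf x ∂π := by
      rw [← integral_const_mul]
      exact integral_congr_ae (Filter.Eventually.of_forall fun x => by ring)
    rw [this]; ring
  have hD0 : 0 ≤ D := by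
    have := integral_nonneg_of_ae hgnn
    linarith [hgeq ▸ this]
  -- the ENNReal energy
  set Q : X → X → ℝ≥0∞ := fun x y => ENNReal.ofReal ((f x - f y) ^ 2) with hQ
  have hQm : Measurable (fun p : X × X => Q p.1 p.2) :=
    (((hfm.comp measurable_fst).sub (hfm.comp measurable_snd)).pow_const 2).ennreal_ofReal
  set EE : ℝ≥0∞ := ∫⁻ x, ∫⁻ y, Q x y ∂(κ x) ∂π with hEE
  have hEEeq : EE = ENNReal.ofReal (2 * D) := by
    have hinner : ∀ᵐ x ∂π, ∫⁻ y, Q x y ∂(κ x) = ENNReal.ofReal (g x) := by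
      filter_upwards [hae, haeexp] with x ⟨h1, h2, hℒ⟩ hx
      have hint : Integrable (fun y => (f x - f y) ^ 2) (κ x) :=
        ((memLp_const (f x)).sub hℒ).integrable_sq
      rw [← ofReal_integral_eq_lintegral_ofReal hint
        (Filter.Eventually.of_forall fun y => sq_nonneg _), hx]
    rw [hEE, lintegral_congr_ae hinner,
      ← ofReal_integral_eq_lintegral_ofReal hgint hgnn, hgeq]
  -- minorization: lintegral comparison
  have hκν : ∀ x ∈ K, ∀ h : X → ℝ≥0∞, Measurable h →
      ENNReal.ofReal α * ∫⁻ y, h y ∂ν ≤ ∫⁻ y, h y ∂(κ x) := by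
    intro x hx h hh
    have hle : (ENNReal.ofReal α) • ν ≤ κ x :=
      Measure.le_iff.2 fun A hA => by simpa using hminor A hA x hx
    calc ENNReal.ofReal α * ∫⁻ y, h y ∂ν = ∫⁻ y, h y ∂((ENNReal.ofReal α) • ν) :=
          (by rw [lintegral_smul_measure, smul_eq_mul])
      _ ≤ ∫⁻ y, h y ∂(κ x) := lintegral_mono' hle le_rfl
  have hαne : ENNReal.ofReal α ≠ 0 := by
    simp [ENNReal.ofReal_eq_zero, not_le, hα]
  -- find x₀ ∈ K with L x₀ < ∞, deduce f ∈ L²(ν)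
  obtain ⟨x₀, hx₀K, hx₀⟩ : ∃ x ∈ K, L x < ∞ := by
    by_contra h
    push_neg at h
    have hsub : K ⊆ {x | ¬ L x < ∞} := fun x hx => not_lt.mpr (h x hx)
    have : π K = 0 := measure_mono_null hsub hLfin
    exact hπK.ne' this
  have hνG : ∫⁻ y, G y ∂ν < ∞ := by
    have hlt := lt_of_le_of_lt (hκν x₀ hx₀K G hGm) hx₀
    by_contra hcontra
    rw [not_lt, top_le_iff] at hcontra
    rw [hcontra, ENNReal.mul_top hαne] at hlt
    exact absurd hlt (lt_irrefl _)
  obtain ⟨hfν, hfν2, hfν2'⟩ := hkey ν inferInstance hνG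
  set c : ℝ := ∫ y, f y ∂ν with hc
  -- Jensen over ν
  have hJ : ∀ t : ℝ, (t - c) ^ 2 ≤ ∫ y, (t - f y) ^ 2 ∂ν := by
    intro t
    have h1 : ∫ y, (t - f y) ∂ν = t - c := by
      rw [integral_sub (integrable_const t) hfν, integral_const]
      simp [hc]
    have h2 : Integrable (fun y => (t - f y) ^ 2) ν :=
      ((memLp_const t).sub hfν2').integrable_sq
    have := sq_integral_le_integral_sq (f := fun y => t - f y) ((integrable_const t).sub hfν) h2
    rwa [h1] at this
  -- the three-step lintegral chain
  have hQxm : ∀ x, Measurable fun y => Q x y := fun x =>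
    ((measurable_const.sub hfm).pow_const 2).ennreal_ofReal
  have hmν : Measurable fun x => ∫⁻ y, Q x y ∂ν :=
    Measurable.lintegral_prod_right' (f := fun p : X × X => Q p.1 p.2) hQm
  have hmκ : Measurable fun x => ∫⁻ y, Q x y ∂(κ x) :=
    Measurable.lintegral_kernel_prod_right' (f := fun p : X × X => Q p.1 p.2) hQm
  have step1 : ∫⁻ x in K, ENNReal.ofReal ((f x - c) ^ 2) ∂π
      ≤ ∫⁻ x in K, ∫⁻ y, Q x y ∂ν ∂π := by
    refine setLIntegral_mono hmν fun x _ => ?_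
    have hint : Integrable (fun y => (f x - f y) ^ 2) ν :=
      ((memLp_const (f x)).sub hfν2').integrable_sq
    rw [hQ]
    rw [← ofReal_integral_eq_lintegral_ofReal hint
      (Filter.Eventually.of_forall fun y => sq_nonneg _)]
    exact ENNReal.ofReal_le_ofReal (hJ (f x))
  have step2 : ENNReal.ofReal α * ∫⁻ x in K, ∫⁻ y, Q x y ∂ν ∂π
      ≤ ∫⁻ x in K, ∫⁻ y, Q x y ∂(κ x) ∂π := by
    rw [← lintegral_const_mul _ hmν]
    exact setLIntegral_mono hmκ fun x hx => hκν x hx _ (hQxm x)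
  have step3 : ∫⁻ x in K, ∫⁻ y, Q x y ∂(κ x) ∂π ≤ EE :=
    setLIntegral_le_lintegral K _
  have hchain : ENNReal.ofReal α * ∫⁻ x in K, ENNReal.ofReal ((f x - c) ^ 2) ∂π
      ≤ ENNReal.ofReal (2 * D) := by
    calc ENNReal.ofReal α * ∫⁻ x in K, ENNReal.ofReal ((f x - c) ^ 2) ∂π
        ≤ ENNReal.ofReal α * ∫⁻ x in K, ∫⁻ y, Q x y ∂ν ∂π := mul_le_mul_right step1 _
      _ ≤ ∫⁻ x in K, ∫⁻ y, Q x y ∂(κ x) ∂π := step2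
      _ ≤ EE := step3
      _ = ENNReal.ofReal (2 * D) := hEEeq
  have hIK : ∫⁻ x in K, ENNReal.ofReal ((f x - c) ^ 2) ∂π ≤ ENNReal.ofReal (2 * D / α) := by
    rw [ENNReal.ofReal_div_of_pos hα]
    rw [ENNReal.le_div_iff_mul_le (Or.inl hαne) (Or.inl ENNReal.ofReal_ne_top)]
    rwa [mul_comm]
  have hreal : ∫ x in K, (f x - c) ^ 2 ∂π ≤ 2 * D / α := by
    rw [integral_eq_lintegral_of_nonneg_ae (f := fun x => (f x - c) ^ 2) (Filter.Eventually.of_forall fun x => sq_nonneg _)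
      ((hfm.sub measurable_const).pow_const 2).aestronglyMeasurable]
    exact ENNReal.toReal_le_of_le_ofReal (by positivity) hIK
  -- the mean minimizes the quadratic
  have hπKne : (π K).toReal ≠ 0 :=
    ENNReal.toReal_ne_zero.mpr ⟨hπK.ne', measure_ne_top π K⟩
  have hrestrict : MemLp f 2 (π.restrict K) := hf.restrict K
  have hfint : Integrable f (π.restrict K) := hrestrict.integrable one_le_two
  have hifm : Integrable (fun x => f x - m) (π.restrict K) := hfint.sub (integrable_const m)
  have hsq_m : Integrable (fun x => (f x - m) ^ 2) (π.restrict K) :=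
    (hrestrict.sub (memLp_const m)).integrable_sq
  have hzero : ∫ x in K, (f x - m) ∂π = 0 := by
    rw [integral_sub hfint (integrable_const m), integral_const, measureReal_def,
      Measure.restrict_apply_univ, smul_eq_mul, hm]
    field_simp
    ring
  have hmin : ∫ x in K, (f x - m) ^ 2 ∂π ≤ ∫ x in K, (f x - c) ^ 2 ∂π := by
    have hexp2 : ∀ x, (f x - c) ^ 2
        = ((f x - m) ^ 2 + (2 * (m - c)) * (f x - m)) + (m - c) ^ 2 := fun x => by ring
    have i2 : Integrable (fun x => (2 * (m - c)) * (f x - m)) (π.restrict K) :=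
      hifm.const_mul _
    have e : ∫ x in K, (f x - c) ^ 2 ∂π
        = ∫ x in K, (f x - m) ^ 2 ∂π + (2 * (m - c)) * ∫ x in K, (f x - m) ∂π
          + (m - c) ^ 2 * (π K).toReal := by
      have i12 : Integrable (fun x => (f x - m) ^ 2 + (2 * (m - c)) * (f x - m))
          (π.restrict K) := hsq_m.add i2
      rw [integral_congr_ae (Filter.Eventually.of_forall hexp2),
        integral_add i12 (integrable_const _),
        integral_add hsq_m i2, integral_const_mul, integral_const, measureReal_def,
        Measure.restrict_apply_univ, smul_eq_mul]
      ring
    rw [e, hzero]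
    have h1 : 0 ≤ (m - c) ^ 2 * (π K).toReal :=
      mul_nonneg (sq_nonneg _) ENNReal.toReal_nonneg
    linarith
  have hfin : 2 * D / α = 2 / α * D := by ring
  calc ∫ x in K, (f x - m) ^ 2 ∂π ≤ ∫ x in K, (f x - c) ^ 2 ∂π := hmin
    _ ≤ 2 * D / α := hreal
    _ = 2 / α * D := hfin


/-- **Claim 2** in the proof of Theorem 1: under the minorization condition on the set `K`
with `π K > 0`, for every `f ∈ L²(π)`, with `m` the mean of `f` over `K`,
`∫_K (f - m)² dπ ≤ (2/α) ⟨f, (I - P) f⟩_π`. -/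
theorem claim2_minorization_bound
    {X : Type*} [MeasurableSpace X]
    (κ : Kernel X X) [IsMarkovKernel κ]
    (π : Measure X) [IsProbabilityMeasure π]
    -- invariance: ∫ Pf dπ = ∫ f dπ for all bounded measurable f
    (hinv : ∀ f : X → ℝ, Measurable f → (∃ C : ℝ, ∀ x, |f x| ≤ C) →
      ∫ x, (∫ y, f y ∂(κ x)) ∂π = ∫ x, f x ∂π)
    (K : Set X) (hK : MeasurableSet K) (hπK : 0 < π K)
    (α : ℝ) (hα : 0 < α) (ν : Measure X) [IsProbabilityMeasure ν]
    -- minorization condition: P 1_A(x) ≥ α ν(A) 1_K(x)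
    (hminor : ∀ A : Set X, MeasurableSet A → ∀ x ∈ K, ENNReal.ofReal α * ν A ≤ κ x A) :
    ∀ f : X → ℝ, MemLp f 2 π →
      (∫ x in K, (f x - (π K).toReal⁻¹ * ∫ y in K, f y ∂π) ^ 2 ∂π)
        ≤ (2 / α) * ∫ x, f x * (f x - ∫ y, f y ∂(κ x)) ∂π := by
  intro f hf
  obtain ⟨g, hgm, hfg⟩ : ∃ g : X → ℝ, StronglyMeasurable g ∧ f =ᵐ[π] g :=
    ⟨hf.1.mk f, hf.1.stronglyMeasurable_mk, hf.1.ae_eq_mk⟩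
  have hgm' : Measurable g := hgm.measurable
  have hg : MemLp g 2 π := hf.ae_eq hfg
  set N : Set X := toMeasurable π {x | f x ≠ g x} with hN
  have hNm : MeasurableSet N := measurableSet_toMeasurable _ _
  have hNnull : π N = 0 := by
    rw [measure_toMeasurable]
    exact hfg
  have hinvN := hinv (N.indicator (1 : X → ℝ)) (measurable_one.indicator hNm)
    ⟨1, fun x => by by_cases h : x ∈ N <;> simp [Set.indicator_apply, h]⟩
  simp_rw [integral_indicator_one hNm, measureReal_def] at hinvN
  have hκN : ∀ᵐ x ∂π, κ x N = 0 := by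
    have hint : Integrable (fun x => ((κ x) N).toReal) π := by
      refine Integrable.mono' (integrable_const (1 : ℝ))
        (Kernel.measurable_coe κ hNm).ennreal_toReal.aestronglyMeasurable ?_
      refine Filter.Eventually.of_forall fun x => ?_
      rw [Real.norm_eq_abs, abs_of_nonneg ENNReal.toReal_nonneg]
      exact ENNReal.toReal_le_of_le_ofReal zero_le_one (by simpa using prob_le_one)
    have h0 : ∫ x, ((κ x) N).toReal ∂π = 0 := by rw [hinvN, hNnull]; simp
    have := (integral_eq_zero_iff_of_nonneg (fun x => ENNReal.toReal_nonneg) hint).mp h0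
    filter_upwards [this] with x hx
    simp only [Pi.zero_apply] at hx
    rcases (ENNReal.toReal_eq_zero_iff _).mp hx with h | h
    · exact h
    · exact absurd h (measure_ne_top _ _)
  have hκfg : ∀ᵐ x ∂π, ∫ y, f y ∂(κ x) = ∫ y, g y ∂(κ x) := by
    filter_upwards [hκN] with x hx
    refine integral_congr_ae ?_
    have : κ x {y | f y ≠ g y} = 0 :=
      measure_mono_null (subset_toMeasurable _ _) hx
    exact this
  have hKint : ∫ y in K, f y ∂π = ∫ y in K, g y ∂π :=
    integral_congr_ae (ae_restrict_of_ae hfg)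
  have hL : ∫ x in K, (f x - (π K).toReal⁻¹ * ∫ y in K, f y ∂π) ^ 2 ∂π
      = ∫ x in K, (g x - (π K).toReal⁻¹ * ∫ y in K, g y ∂π) ^ 2 ∂π := by
    rw [hKint]
    refine integral_congr_ae (ae_restrict_of_ae ?_)
    filter_upwards [hfg] with x hx
    rw [hx]
  have hR : ∫ x, f x * (f x - ∫ y, f y ∂(κ x)) ∂π
      = ∫ x, g x * (g x - ∫ y, g y ∂(κ x)) ∂π := by
    refine integral_congr_ae ?_
    filter_upwards [hfg, hκfg] with x hx h2
    rw [hx, h2]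
  rw [hL, hR]
  exact claim2_aux κ π hinv K hK hπK α hα ν hminor g hgm' hg
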